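/- (Necessity of rationality for limit cycles.) Consider the switched quantized control system with parameter α satisfying 1 < α < 3/2 and disturbance rounding error Δ_d with 0 < |Δ_d| ≤ 1/2, and suppose condition (9) holds at some time k. Suppose the trajectory is eventually periodic with period m ≥ 1: there exists k̄ ≥ k+2 such that e(j+m) = e(j) and ū(j+m) = ū(j) for all j ≥ k̄. Let n be the number of indices j ∈ {k̄, k̄+1, …, k̄+m−1} with ρ(e(j)) = sign(Δ_d). Then 1 ≤ n < m and |Δ_d| = n/m; in particular Δ_d is rational. -/

import Mathlib

/-- Sign function: 1 for positive, 0 for zero, -1 for negative. -/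
noncomputable def rsign (z : ℝ) : ℤ :=
  if 0 < z then 1 else if z = 0 then 0 else -1

/-- Rounding operator: rounds to the nearest integer, ties away from zero. -/
noncomputable def rho (z : ℝ) : ℤ :=
  if Int.fract |z| < 1/2 then rsign z * ⌊|z|⌋ else rsign z * (⌊|z|⌋ + 1)

/-- The switched quantized control system with parameter `α` and disturbance
rounding error `Δd`, with state trajectory `(e, u)`. -/
def Traj (α Δd : ℝ) (e u : ℕ → ℝ) : Prop :=
  ∀ k : ℕ,
    e (k+1) = e k + (rho (u k) : ℝ) + Δd ∧
    u (k+1) = if rho (e (k+1)) = 0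
      then ((rho (u k) : ℝ) + (rho (e k) : ℝ))
      else (u k + (rho (e k) : ℝ) - α * (rho (e (k+1)) : ℝ))

/-- Condition (9) at time `k`. -/
def Cond9 (α Δd : ℝ) (e u : ℕ → ℝ) (k : ℕ) : Prop :=
  (-(1/2) < e k ∧ e k < 1/2) ∧
  (1 ≤ α - u k * (rsign Δd : ℝ) ∧ α - u k * (rsign Δd : ℝ) < 3/2) ∧
  (-(1/2) < u k ∧ u k < 1/2)

lemma rsign_neg_eq (z : ℝ) : rsign (-z) = - rsign z := by
  unfold rsign
  rcases lt_trichotomy z 0 with h|h|h <;> split_ifs <;> simp_all <;> linarith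

lemma rho_neg (z : ℝ) : rho (-z) = - rho z := by
  unfold rho
  rw [abs_neg, rsign_neg_eq]
  split_ifs <;> ring

lemma rho_eq_zero {z : ℝ} (h : |z| < 1/2) : rho z = 0 := by
  unfold rho
  have hf : Int.fract |z| = |z| := Int.fract_eq_self.mpr ⟨abs_nonneg z, by linarith⟩
  have h0 : ⌊|z|⌋ = 0 := by
    rw [Int.floor_eq_zero_iff]
    constructor
    · exact abs_nonneg z
    · linarith
  rw [if_pos (by rw [hf]; exact h), h0, mul_zero]

lemma rho_eq_one {z : ℝ} (h1 : 1/2 ≤ z) (h2 : z < 1) : rho z = 1 := by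
  have hz : 0 < z := by linarith
  have ha : |z| = z := abs_of_pos hz
  have h0 : ⌊|z|⌋ = 0 := by
    rw [ha, Int.floor_eq_zero_iff]; constructor <;> [linarith; exact h2]
  have hf : Int.fract |z| = |z| := by rw [Int.fract, h0]; push_cast; ring
  unfold rho
  rw [if_neg (by rw [hf, ha]; linarith), h0, rsign, if_pos hz]; ring

lemma rho_eq_one' {z : ℝ} (h1 : 1 ≤ z) (h2 : z < 3/2) : rho z = 1 := by
  have hz : 0 < z := by linarith
  have ha : |z| = z := abs_of_pos hz
  have h0 : ⌊|z|⌋ = 1 := by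
    rw [ha, Int.floor_eq_iff]; push_cast; constructor <;> linarith
  have hf : Int.fract |z| = z - 1 := by rw [Int.fract, h0, ha]; push_cast; ring
  unfold rho
  rw [if_pos (by rw [hf]; linarith), h0, rsign, if_pos hz]; ring

lemma rho_eq_sign {s : ℤ} (hs : s = 1 ∨ s = -1) {z : ℝ}
    (h1 : 1/2 ≤ (s:ℝ)*z) (h2 : (s:ℝ)*z < 1) : rho z = s := by
  rcases hs with rfl|rfl
  · push_cast at h1 h2; rw [one_mul] at h1 h2; exact rho_eq_one h1 h2
  · push_cast at h1 h2
    have : rho (-z) = 1 := rho_eq_one (by linarith) (by linarith)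
    rw [rho_neg] at this; omega

lemma rho_eq_sign' {s : ℤ} (hs : s = 1 ∨ s = -1) {z : ℝ}
    (h1 : 1 ≤ (s:ℝ)*z) (h2 : (s:ℝ)*z < 3/2) : rho z = s := by
  rcases hs with rfl|rfl
  · push_cast at h1 h2; rw [one_mul] at h1 h2; exact rho_eq_one' h1 h2
  · push_cast at h1 h2
    have : rho (-z) = 1 := rho_eq_one' (by linarith) (by linarith)
    rw [rho_neg] at this; omega

/-- Invariant region P: small state. -/
def GoodP (α Δd : ℝ) (e u : ℕ → ℝ) (j : ℕ) : Prop :=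
  |e j| < 1/2 ∧ |u j| < 1/2 ∧
    1 ≤ α - u j * (rsign Δd : ℝ) ∧ α - u j * (rsign Δd : ℝ) < 3/2

/-- Invariant region Q: overshoot state. -/
def GoodQ (α Δd : ℝ) (e u : ℕ → ℝ) (j : ℕ) : Prop :=
  (1/2 ≤ (rsign Δd : ℝ) * e j ∧ (rsign Δd : ℝ) * e j < 1) ∧
  (1 ≤ (rsign Δd : ℝ) * (- u j) ∧ (rsign Δd : ℝ) * (- u j) < 3/2)

open scoped Classical in
theorem stmt_3 (α Δd : ℝ) (hα : 1 < α ∧ α < 3/2) (hΔ : 0 < |Δd| ∧ |Δd| ≤ 1/2)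
    (e u : ℕ → ℝ) (htraj : Traj α Δd e u) (k : ℕ) (h9 : Cond9 α Δd e u k)
    (m : ℕ) (hm : 1 ≤ m) (kb : ℕ) (hkb : k + 2 ≤ kb)
    (hper : ∀ j : ℕ, kb ≤ j → e (j+m) = e j ∧ u (j+m) = u j)
    (n : ℕ)
    (hn : n = ((Finset.Ico kb (kb+m)).filter (fun j => rho (e j) = rsign Δd)).card) :
    (1 ≤ n ∧ n < m) ∧ |Δd| = (n : ℝ) / (m : ℝ) := by
  have hd0 : Δd ≠ 0 := by
    intro h; rw [h, abs_zero] at hΔ; exact lt_irrefl 0 hΔ.1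
  set s : ℤ := rsign Δd with hsdef
  set sR : ℝ := (s : ℝ) with hsRdef
  have hscases : s = 1 ∨ s = -1 := by
    rcases lt_trichotomy Δd 0 with h|h|h
    · right; rw [hsdef]; unfold rsign; rw [if_neg (by linarith), if_neg hd0]
    · exact absurd h hd0
    · left; rw [hsdef]; unfold rsign; rw [if_pos h]
  have hsd : sR * Δd = |Δd| := by
    rcases lt_trichotomy Δd 0 with h|h|h
    · have : s = -1 := by rw [hsdef]; unfold rsign; rw [if_neg (by linarith), if_neg hd0]
      rw [hsRdef, this, abs_of_neg h]; push_cast; ring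
    · exact absurd h hd0
    · have : s = 1 := by rw [hsdef]; unfold rsign; rw [if_pos h]
      rw [hsRdef, this, abs_of_pos h]; push_cast; ring
  have hss : sR * sR = 1 := by
    rcases hscases with h|h <;> rw [hsRdef, h] <;> norm_num
  have habs : ∀ x : ℝ, |sR * x| = |x| := by
    intro x
    rcases hscases with h|h <;> rw [hsRdef, h] <;> push_cast <;>
      simp [abs_mul]
  have hsne : s ≠ 0 := by rcases hscases with h|h <;> omega
  -- the invariant
  have inv : ∀ i : ℕ, GoodP α Δd e u (k + i) ∨ GoodQ α Δd e u (k + i) := by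
    intro i
    induction i with
    | zero =>
      left
      obtain ⟨⟨he1, he2⟩, ⟨ha1, ha2⟩, ⟨hu1, hu2⟩⟩ := h9
      exact ⟨abs_lt.mpr ⟨he1, he2⟩, abs_lt.mpr ⟨hu1, hu2⟩, ha1, ha2⟩
    | succ i ih =>
      set j := k + i with hjdef
      have hj1 : k + (i + 1) = j + 1 := by omega
      rw [hj1]
      rcases ih with hP | hQ
      · obtain ⟨he, hu, ha1, ha2⟩ := hP
        have hre : rho (e j) = 0 := rho_eq_zero he
        have hru : rho (u j) = 0 := rho_eq_zero hu
        have he1 : e (j+1) = e j + Δd := by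
          have h := (htraj j).1; rw [hru] at h; push_cast at h; linarith
        have hae : |sR * e j| < 1/2 := by rw [habs]; exact he
        have hae' := abs_lt.mp hae
        have h1 : sR * e (j+1) = sR * e j + |Δd| := by
          rw [he1, mul_add, hsd]
        by_cases hc : |e (j+1)| < 1/2
        · left
          have hr0 : rho (e (j+1)) = 0 := rho_eq_zero hc
          have hu1 : u (j+1) = 0 := by
            have h := (htraj j).2; rw [if_pos hr0, hre, hru] at h
            push_cast at h; linarith
          refine ⟨hc, by rw [hu1]; norm_num, ?_, ?_⟩
          · rw [hu1, zero_mul, sub_zero]; linarith [hα.1]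
          · rw [hu1, zero_mul, sub_zero]; exact hα.2
        · right
          have hge : 1/2 ≤ |sR * e (j+1)| := by rw [habs]; linarith [not_lt.mp hc]
          have h2 : 1/2 ≤ sR * e (j+1) := by
            rw [h1] at hge ⊢
            rcases abs_cases (sR * e j + |Δd|) with ⟨h, _⟩ | ⟨h, _⟩ <;>
              linarith [hΔ.1, hae'.1]
          have h3 : sR * e (j+1) < 1 := by
            rw [h1]; linarith [hΔ.2, hae'.2]
          have hres : rho (e (j+1)) = s := rho_eq_sign hscases h2 h3
          have hu1 : u (j+1) = u j - α * sR := by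
            have h := (htraj j).2
            rw [if_neg (by rw [hres]; exact hsne), hre, hres] at h
            push_cast at h; rw [hsRdef]; linarith
          refine ⟨⟨h2, h3⟩, ?_, ?_⟩
          · have heq : sR * (-u (j+1)) = α - u j * sR := by
              rw [hu1]; linear_combination α * hss
            rw [heq]; exact ha1
          · have heq : sR * (-u (j+1)) = α - u j * sR := by
              rw [hu1]; linear_combination α * hss
            rw [heq]; exact ha2
      · obtain ⟨⟨he1, he2⟩, ⟨hu1, hu2⟩⟩ := hQ
        have hre : rho (e j) = s := rho_eq_sign hscases he1 he2
        have hru : rho (u j) = -s := by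
          have h : rho (-u j) = s := rho_eq_sign' hscases hu1 hu2
          have h2 := rho_neg (u j); omega
        have hst : e (j+1) = e j - sR + Δd := by
          have h := (htraj j).1; rw [hru] at h; push_cast at h
          rw [hsRdef]; linarith
        have hnew : sR * e (j+1) = sR * e j - 1 + |Δd| := by
          rw [hst]; linear_combination hsd - hss
        have hb : |e (j+1)| < 1/2 := by
          have : |sR * e (j+1)| < 1/2 := by
            rw [abs_lt]; constructor
            · rw [hnew]; linarith [hΔ.1]
            · rw [hnew]; linarith [hΔ.2]
          rwa [habs] at this
        have hr0 : rho (e (j+1)) = 0 := rho_eq_zero hb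
        have hu' : u (j+1) = 0 := by
          have h := (htraj j).2; rw [if_pos hr0, hru, hre] at h
          push_cast at h; linarith
        left
        refine ⟨hb, by rw [hu']; norm_num, ?_, ?_⟩
        · rw [hu', zero_mul, sub_zero]; linarith [hα.1]
        · rw [hu', zero_mul, sub_zero]; exact hα.2
  -- step equation
  have step : ∀ j, k ≤ j →
      e (j+1) = e j + Δd - (if rho (e j) = s then sR else 0) := by
    intro j hj
    obtain ⟨i, rfl⟩ := Nat.exists_eq_add_of_le hj
    rcases inv i with hP | hQ
    · obtain ⟨he, hu, _, _⟩ := hP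
      have hre : rho (e (k+i)) = 0 := rho_eq_zero he
      have hru : rho (u (k+i)) = 0 := rho_eq_zero hu
      have h := (htraj (k+i)).1
      rw [hru] at h; push_cast at h
      rw [if_neg (by rw [hre]; omega)]; linarith
    · obtain ⟨⟨he1, he2⟩, ⟨hu1, hu2⟩⟩ := hQ
      have hre : rho (e (k+i)) = s := rho_eq_sign hscases he1 he2
      have hru : rho (u (k+i)) = -s := by
        have h : rho (-u (k+i)) = s := rho_eq_sign' hscases hu1 hu2
        have h2 := rho_neg (u (k+i)); omega
      have h := (htraj (k+i)).1
      rw [hru] at h; push_cast at h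
      rw [if_pos hre, hsRdef]; linarith
  -- telescoping sum over one period
  have tele : ∑ i ∈ Finset.range m, (e (kb + i + 1) - e (kb + i))
      = e (kb + m) - e kb := by
    simpa [add_assoc] using Finset.sum_range_sub (fun i => e (kb + i)) m
  have hper0 : e (kb + m) = e kb := (hper kb le_rfl).1
  have hterm : ∀ i ∈ Finset.range m,
      e (kb + i + 1) - e (kb + i)
        = Δd - (if rho (e (kb + i)) = s then sR else 0) := by
    intro i _
    have h := step (kb + i) (by omega)
    rw [h]; ring
  have hsum : ∑ i ∈ Finset.range m,
      (Δd - (if rho (e (kb + i)) = s then sR else 0)) = 0 := by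
    rw [← Finset.sum_congr rfl hterm, tele, hper0]; ring
  have hcount : (n : ℕ) =
      ((Finset.range m).filter (fun i => rho (e (kb + i)) = s)).card := by
    rw [hn, Finset.card_filter, Finset.card_filter, Finset.sum_Ico_eq_sum_range]
    simp
  have hkey : (m : ℝ) * Δd = (n : ℝ) * sR := by
    have h1 : ∑ i ∈ Finset.range m,
        (if rho (e (kb + i)) = s then sR else 0)
        = ((Finset.range m).filter (fun i => rho (e (kb + i)) = s)).card * sR := by
      rw [← Finset.sum_filter, Finset.sum_const, nsmul_eq_mul]
    rw [Finset.sum_sub_distrib, Finset.sum_const, Finset.card_range, nsmul_eq_mul, h1, ← hcount] at hsum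
    linarith
  have hs1 : |sR| = 1 := by
    rcases hscases with h|h <;> rw [hsRdef, h] <;> norm_num
  have hmain : (m : ℝ) * |Δd| = n := by
    have h1 : |(m : ℝ) * Δd| = (m : ℝ) * |Δd| := by
      rw [abs_mul, abs_of_nonneg (by positivity : (0:ℝ) ≤ (m:ℝ))]
    have h2 : |(n : ℝ) * sR| = n := by
      rw [abs_mul, hs1, mul_one, abs_of_nonneg (by positivity : (0:ℝ) ≤ (n:ℝ))]
    rw [← h1, hkey, h2]
  have hmpos : (0 : ℝ) < m := by exact_mod_cast Nat.lt_of_lt_of_le Nat.zero_lt_one hm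
  have hnpos : 1 ≤ n := by
    by_contra h
    push_neg at h
    interval_cases n
    simp at hmain
    rcases hmain with h'|h'
    · linarith
    · exact hd0 h'
  have hnm : n < m := by
    have h1 : (n : ℝ) ≤ (m : ℝ) * (1/2) := by
      rw [← hmain]
      have := hΔ.2
      nlinarith
    have h2 : (n : ℝ) < m := by linarith
    exact_mod_cast h2
  refine ⟨⟨hnpos, hnm⟩, ?_⟩
  field_simp
  linarith [hmain]
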